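/- Let C be a variable-bound-free SDBM with zero remainders and suppose the congruence constraint on x_n is x_n ≡ 0 (mod D), where D is the lcm of all congruence divisors. For t ∈ Dℤ, let S_t be the set of solutions with x_n = t. Then S_t = {x + t : x ∈ S_0}, and S_t = ∅ for t ∉ Dℤ. -/
import Mathlib


/-- For a variable-bound-free SDBM with zero remainders whose last variable has
congruence divisor `D = lcm(d)`, the set `S t` of solutions with last coordinate
equal to `t` satisfies `S t = {x + t | x ∈ S 0}` for `t ∈ Dℤ`, and `S t = ∅`
for `t ∉ Dℤ`. -/
theorem sdbm_solution_fibers (n : ℕ) (E : Set (Fin (n + 1) × Fin (n + 1) × ℤ))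
    (d : Fin (n + 1) → ℤ) (hd : ∀ i, 1 ≤ d i)
    (D : ℤ) (hD : D = Finset.univ.lcm d) (hlast : d (Fin.last n) = D)
    (S : ℤ → Set (Fin (n + 1) → ℤ))
    (hS : ∀ t, S t = {x | (∀ i, d i ∣ x i) ∧
      (∀ p ∈ E, -x p.1 + x p.2.1 ≤ p.2.2) ∧ x (Fin.last n) = t}) :
    (∀ t : ℤ, D ∣ t → S t = (fun (x : Fin (n + 1) → ℤ) (i : Fin (n + 1)) => x i + t) '' S 0) ∧
    (∀ t : ℤ, ¬ D ∣ t → S t = ∅) := by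
  have hdiv : ∀ i, d i ∣ D := by
    intro i
    rw [hD]
    exact Finset.dvd_lcm (Finset.mem_univ i)
  constructor
  · intro t ht
    ext y
    simp only [hS, Set.mem_setOf_eq, Set.mem_image]
    constructor
    · rintro ⟨h1, h2, h3⟩
      refine ⟨fun i => y i - t, ⟨?_, ?_, ?_⟩, ?_⟩
      · intro i
        exact dvd_sub (h1 i) ((hdiv i).trans ht)
      · intro p hp
        have := h2 p hp
        simp only []
        linarith
      · simp [h3]
      · funext i; ring
    · rintro ⟨x, ⟨h1, h2, h3⟩, rfl⟩
      refine ⟨fun i => dvd_add (h1 i) ((hdiv i).trans ht), fun p hp => ?_, by simp [h3]⟩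
      have := h2 p hp
      simp only []
      linarith
  · intro t ht
    rw [hS]
    ext y
    simp only [Set.mem_setOf_eq, Set.mem_empty_iff_false, iff_false]
    rintro ⟨h1, _, h3⟩
    exact ht (by rw [← hlast, ← h3] at *; exact h1 (Fin.last n))
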